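/- Continuity of the modulus under tilting: let f satisfy the polynomial local growth expansion with k_r ≥ k_l (and λ_r ≥ λ_l if k_r = k_l). Define g(x) = f(x) − εx. Then for any constants c < 1 < C, for all sufficiently small ε > 0, ω_g(cε) ≤ (2C)^{1/(k_r−1)}·(ε/λ_r)^{1/(k_r−1)} ≤ e·(2C²)^{1/(k_r−1)}·ω_f(ε). -/

import Mathlib

noncomputable section
open Set Filter
open scoped Classical

/-- Subdifferential of `f` at `x` relative to the domain `[a,b]`. -/
def subD (a b : ℝ) (f : ℝ → ℝ) (x : ℝ) : Set ℝ :=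
  {s | ∀ z ∈ Icc a b, f x + s * (z - x) ≤ f z}

/-- The minimal-norm subgradient of `f` at `x` (projection of `0` onto `∂f(x)`). -/
noncomputable def minSubD (a b : ℝ) (f : ℝ → ℝ) (x : ℝ) : ℝ :=
  if (0 : ℝ) ∈ subD a b f x then 0
  else if ∀ s ∈ subD a b f x, 0 < s then sInf (subD a b f x)
  else sSup (subD a b f x)

/-- `κ(f,g) = sup_x |f'(x) - g'(x)|` over the domain, with minimal-norm subgradients. -/
noncomputable def kappaD (a b : ℝ) (f g : ℝ → ℝ) : ℝ :=
  sSup {r | ∃ x ∈ Icc a b, r = |minSubD a b f x - minSubD a b g x|}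

/-- Minimizers of `f` over `[a,b]`. -/
def argminD (a b : ℝ) (f : ℝ → ℝ) : Set ℝ :=
  {x ∈ Icc a b | ∀ z ∈ Icc a b, f x ≤ f z}

/-- `d(f,g)`: distance between the minimizer sets of `f` and `g`. -/
noncomputable def dD (a b : ℝ) (f g : ℝ → ℝ) : ℝ :=
  sInf {r | ∃ x ∈ argminD a b f, ∃ y ∈ argminD a b g, r = |x - y|}

/-- The modulus of continuity `ω_f(ε) = sup {d(f,g) : g convex Lipschitz, κ(f,g) ≤ ε}`. -/
noncomputable def omegaD (a b : ℝ) (f : ℝ → ℝ) (ε : ℝ) : ℝ :=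
  sSup {r | ∃ g : ℝ → ℝ, ConvexOn ℝ (Icc a b) g ∧ (∃ L, LipschitzOnWith L g (Icc a b)) ∧
    kappaD a b f g ≤ ε ∧ r = dD a b f g}

/-- Continuity of the modulus under tilting: with polynomial local growth
(`k_r ≥ k_l`, and `λ_r ≥ λ_l` if `k_r = k_l`), for `g(x) = f(x) − εx` and any constants
`c < 1 < C`, for all sufficiently small `ε > 0`,
`ω_g(cε) ≤ (2C)^{1/(k_r−1)}·(ε/λ_r)^{1/(k_r−1)} ≤ e·(2C²)^{1/(k_r−1)}·ω_f(ε)`. -/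
lemma subD_ordConn {a b : ℝ} {f : ℝ → ℝ} {x s1 s2 s : ℝ}
    (h1 : s1 ∈ subD a b f x) (h2 : s2 ∈ subD a b f x) (hs1 : s1 ≤ s) (hs2 : s ≤ s2) :
    s ∈ subD a b f x := by
  intro z hz
  rcases le_total z x with hzx | hzx
  · have := h1 z hz
    nlinarith [mul_le_mul_of_nonpos_right hs1 (by linarith : z - x ≤ 0)]
  · have := h2 z hz
    nlinarith [mul_le_mul_of_nonneg_right hs2 (by linarith : (0:ℝ) ≤ z - x)]

lemma subD_closed (a b : ℝ) (f : ℝ → ℝ) (x : ℝ) : IsClosed (subD a b f x) := by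
  have : subD a b f x = ⋂ z ∈ Icc a b, {s : ℝ | f x + s * (z - x) ≤ f z} := by
    ext s; simp [subD, Set.mem_iInter]
  rw [this]
  exact isClosed_biInter fun z hz =>
    isClosed_le (by continuity) continuous_const

lemma exists_subD {a b : ℝ} {f : ℝ → ℝ} {L : NNReal} {x : ℝ}
    (hconv : ConvexOn ℝ (Icc a b) f) (hlip : LipschitzOnWith L f (Icc a b))
    (hx : x ∈ Icc a b) : ∃ s ∈ subD a b f x, |s| ≤ (L : ℝ) := by
  have hdist := lipschitzOnWith_iff_dist_le_mul.mp hlip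
  have habs : ∀ y ∈ Icc a b, ∀ z ∈ Icc a b, |f y - f z| ≤ (L : ℝ) * |y - z| := by
    intro y hy z hz
    have := hdist y hy z hz
    rwa [Real.dist_eq, Real.dist_eq] at this
  rcases eq_or_lt_of_le hx.1 with heq | hax
  · -- x = a : s = -L works
    subst heq
    refine ⟨-(L : ℝ), ?_, by simp⟩
    intro z hz
    have h := habs a hx z hz
    have habs2 : |a - z| = z - a := by
      rw [abs_of_nonpos (by linarith [hz.1])]; ring
    rw [habs2] at h
    rcases abs_le.mp h with ⟨h1, h2⟩
    nlinarith
  · -- a < x : use sup of left slopes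
    set T : Set ℝ := (fun z => (f x - f z) / (x - z)) '' (Ico a x) with hT
    have hTne : T.Nonempty := ⟨_, ⟨a, ⟨le_refl a, hax⟩, rfl⟩⟩
    have hTle : ∀ t ∈ T, t ≤ (L : ℝ) := by
      rintro t ⟨z, hz, rfl⟩
      have hxz : 0 < x - z := by linarith [hz.2]
      rw [div_le_iff₀ hxz]
      have := habs x hx z ⟨hz.1, by linarith [hx.2]⟩
      have habs2 : |x - z| = x - z := abs_of_pos hxz
      calc f x - f z ≤ |f x - f z| := le_abs_self _
        _ ≤ (L : ℝ) * |x - z| := this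
        _ = (L : ℝ) * (x - z) := by rw [habs2]
    have hTge : -(L : ℝ) ≤ (f x - f a) / (x - a) := by
      have hxa : 0 < x - a := by linarith
      rw [le_div_iff₀ hxa]
      have := habs x hx a ⟨le_refl a, le_trans hax.le hx.2⟩
      have habs2 : |x - a| = x - a := abs_of_pos hxa
      rcases abs_le.mp this with ⟨h1, h2⟩
      rw [habs2] at h1
      linarith
    have hbdd : BddAbove T := ⟨(L : ℝ), hTle⟩
    set s := sSup T with hs
    have hsL : s ≤ (L : ℝ) := csSup_le hTne hTle
    have hsmL : -(L : ℝ) ≤ s :=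
      le_trans hTge (le_csSup hbdd ⟨a, ⟨le_refl a, hax⟩, rfl⟩)
    refine ⟨s, ?_, abs_le.mpr ⟨hsmL, hsL⟩⟩
    intro z hz
    rcases lt_trichotomy z x with hzx | rfl | hzx
    · have hmem : (f x - f z) / (x - z) ≤ s :=
        le_csSup hbdd ⟨z, ⟨hz.1, hzx⟩, rfl⟩
      have hxz : 0 < x - z := by linarith
      rw [div_le_iff₀ hxz] at hmem
      nlinarith
    · simp
    · have hle : s ≤ (f z - f x) / (z - x) := by
        apply csSup_le hTne
        rintro t ⟨w, hw, rfl⟩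
        have := hconv.slope_mono_adjacent (x := w) (y := x) (z := z)
          ⟨hw.1, le_trans hw.2.le hx.2⟩ hz hw.2 hzx
        calc (f x - f w) / (x - w) = (f x - f w) / (x - w) := rfl
          _ ≤ (f z - f x) / (z - x) := this
      have hzx' : 0 < z - x := by linarith
      rw [le_div_iff₀ hzx'] at hle
      nlinarith

lemma minSubD_spec {a b : ℝ} {f : ℝ → ℝ} {L : NNReal} {x : ℝ}
    (hconv : ConvexOn ℝ (Icc a b) f) (hlip : LipschitzOnWith L f (Icc a b))
    (hx : x ∈ Icc a b) :
    minSubD a b f x ∈ subD a b f x ∧ ∀ s ∈ subD a b f x, |minSubD a b f x| ≤ |s| := by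
  obtain ⟨s0, hs0, hs0L⟩ := exists_subD hconv hlip hx
  have hne : (subD a b f x).Nonempty := ⟨s0, hs0⟩
  unfold minSubD
  split_ifs with h1 h2
  · exact ⟨h1, fun s hs => by simp⟩
  · -- all positive, sInf
    have hbdd : BddBelow (subD a b f x) := ⟨0, fun s hs => (h2 s hs).le⟩
    have hmem : sInf (subD a b f x) ∈ subD a b f x :=
      (subD_closed a b f x).csInf_mem hne hbdd
    have hpos : 0 < sInf (subD a b f x) := h2 _ hmem
    refine ⟨hmem, fun s hs => ?_⟩
    rw [abs_of_pos hpos, abs_of_pos (h2 s hs)]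
    exact csInf_le hbdd hs
  · -- some nonpositive, sSup
    push_neg at h2
    obtain ⟨s1, hs1, hs1le⟩ := h2
    have hall : ∀ s ∈ subD a b f x, s ≤ 0 := by
      intro s hs
      by_contra hpos
      push_neg at hpos
      exact h1 (subD_ordConn hs1 hs hs1le hpos.le)
    have hbdd : BddAbove (subD a b f x) := ⟨0, hall⟩
    have hmem : sSup (subD a b f x) ∈ subD a b f x :=
      (subD_closed a b f x).csSup_mem hne hbdd
    refine ⟨hmem, fun s hs => ?_⟩
    have h1' : s ≤ sSup (subD a b f x) := le_csSup hbdd hs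
    have h2' : sSup (subD a b f x) ≤ 0 := hall _ hmem
    rw [abs_of_nonpos h2', abs_of_nonpos (hall s hs)]
    linarith

lemma minSubD_abs_le {a b : ℝ} {f : ℝ → ℝ} {L : NNReal} {x : ℝ}
    (hconv : ConvexOn ℝ (Icc a b) f) (hlip : LipschitzOnWith L f (Icc a b))
    (hx : x ∈ Icc a b) : |minSubD a b f x| ≤ (L : ℝ) := by
  obtain ⟨s0, hs0, hs0L⟩ := exists_subD hconv hlip hx
  exact le_trans ((minSubD_spec hconv hlip hx).2 s0 hs0) hs0L

lemma proj_dist {S : Set ℝ} {ε u w : ℝ}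
    (hS : ∀ s1 ∈ S, ∀ s2 ∈ S, ∀ s, s1 ≤ s → s ≤ s2 → s ∈ S)
    (hε : 0 < ε) (hu : u ∈ S) (humin : ∀ s ∈ S, |u| ≤ |s|)
    (hw : w ∈ S) (hwmin : ∀ s ∈ S, |w - ε| ≤ |s - ε|) :
    |u - (w - ε)| ≤ ε := by
  have huw : u ≤ w := by
    by_contra hlt
    push_neg at hlt
    rcases le_or_gt 0 w with hw0 | hw0
    · rcases le_or_gt 0 u with hu0 | hu0
      · -- 0 ≤ w < u : |u| ≤ |w| fails
        have h := humin w hw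
        rw [abs_of_nonneg hu0, abs_of_nonneg hw0] at h
        linarith
      · -- u < 0 ≤ w contradicts w < u
        linarith
    · rcases le_or_gt 0 u with hu0 | hu0
      · -- w < 0 ≤ u : 0 ∈ S, so u = 0, then w-side gives w ≥ 0
        have h0 : (0:ℝ) ∈ S := hS w hw u hu 0 hw0.le hu0
        have hu0' := humin 0 h0
        simp only [abs_zero] at hu0'
        have huz : u = 0 := abs_eq_zero.mp (le_antisymm hu0' (abs_nonneg u))
        have h := hwmin u hu
        rw [huz] at h
        have hwε : w - ε < 0 := by linarith
        rw [abs_of_neg hwε] at h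
        simp only [zero_sub, abs_neg, abs_of_pos hε] at h
        linarith
      ·
        have h1 := hwmin u hu
        have hu' : u - ε < 0 := by linarith
        have hw' : w - ε < 0 := by linarith
        rw [abs_of_neg hu', abs_of_neg hw'] at h1
        linarith
  have hwu : w ≤ u + ε := by
    by_contra hlt
    push_neg at hlt
    have hm : u + ε ∈ S := hS u hu w hw (u + ε) (by linarith) (by linarith)
    have h1 : |w - ε| ≤ |u| := by
      have := hwmin (u + ε) hm
      simpa using this
    have h2 : |u| ≤ |w| := humin w hw
    rcases le_or_gt 0 u with hu0 | hu0
    · have hwε : 0 < w - ε := by linarith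
      rw [abs_of_pos hwε, abs_of_nonneg hu0] at h1
      linarith
    · rcases le_or_gt w 0 with hw0 | hw0
      · rw [abs_of_neg hu0, abs_of_nonpos hw0] at h2
        linarith
      · have h0 : (0:ℝ) ∈ S := hS u hu w hw 0 hu0.le hw0.le
        have := humin 0 h0
        simp at this
        linarith
  rw [abs_le]
  constructor <;> linarith

lemma subD_tilt {a b : ℝ} {f : ℝ → ℝ} {ε y s : ℝ} :
    s ∈ subD a b (fun x => f x - ε * x) y ↔ s + ε ∈ subD a b f y := by
  constructor
  · intro h z hz
    have := h z hz
    simp only at this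
    nlinarith [this]
  · intro h z hz
    have := h z hz
    simp only
    nlinarith [this]

lemma tilt_convex {a b ε : ℝ} {f : ℝ → ℝ} (hconv : ConvexOn ℝ (Icc a b) f) :
    ConvexOn ℝ (Icc a b) (fun x => f x - ε * x) := by
  refine ⟨hconv.1, fun x hx y hy p q hp hq hpq => ?_⟩
  have := hconv.2 hx hy hp hq hpq
  simp only [smul_eq_mul] at *
  nlinarith [this]

lemma tilt_lipschitz {a b ε : ℝ} {f : ℝ → ℝ} {L : NNReal}
    (hlip : LipschitzOnWith L f (Icc a b)) :
    LipschitzOnWith (L + ‖ε‖₊) (fun x => f x - ε * x) (Icc a b) := by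
  rw [lipschitzOnWith_iff_dist_le_mul]
  intro x hx y hy
  have h1 := lipschitzOnWith_iff_dist_le_mul.mp hlip x hx y hy
  rw [Real.dist_eq, Real.dist_eq] at *
  simp only [NNReal.coe_add, coe_nnnorm, Real.norm_eq_abs]
  have h2 : |(f x - ε * x) - (f y - ε * y)| ≤ |f x - f y| + |ε| * |x - y| := by
    calc |(f x - ε * x) - (f y - ε * y)| = |(f x - f y) + (-(ε * (x - y)))| := by ring_nf
      _ ≤ |f x - f y| + |(-(ε * (x - y)))| := abs_add_le _ _
      _ = |f x - f y| + |ε| * |x - y| := by rw [abs_neg, abs_mul]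
  nlinarith [abs_nonneg (x - y)]

lemma kappa_tilt_le {a b ε : ℝ} {f : ℝ → ℝ} {L : NNReal}
    (hconv : ConvexOn ℝ (Icc a b) f) (hlip : LipschitzOnWith L f (Icc a b))
    (hε : 0 < ε) : kappaD a b f (fun x => f x - ε * x) ≤ ε := by
  apply Real.sSup_le _ hε.le
  rintro r ⟨x, hx, rfl⟩
  obtain ⟨hu, humin⟩ := minSubD_spec hconv hlip hx
  obtain ⟨hv, hvmin⟩ := minSubD_spec (tilt_convex (ε := ε) hconv) (tilt_lipschitz hlip) hx
  set u := minSubD a b f x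
  set v := minSubD a b (fun x => f x - ε * x) x
  have hw : v + ε ∈ subD a b f x := subD_tilt.mp hv
  have hwmin : ∀ s ∈ subD a b f x, |(v + ε) - ε| ≤ |s - ε| := by
    intro s hs
    have : s - ε ∈ subD a b (fun x => f x - ε * x) x := by
      apply subD_tilt.mpr; simpa using hs
    simpa using hvmin _ this
  have := proj_dist (fun s1 h1 s2 h2 s hs1 hs2 => subD_ordConn h1 h2 hs1 hs2)
    hε hu humin hw hwmin
  calc |u - v| = |u - ((v + ε) - ε)| := by ring_nf
    _ ≤ ε := this

lemma argminD_nonempty {a b : ℝ} {h : ℝ → ℝ} (hab : a ≤ b)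
    (hcont : ContinuousOn h (Icc a b)) : ∃ y, y ∈ argminD a b h := by
  obtain ⟨y, hy, hmin⟩ := isCompact_Icc.exists_isMinOn (Set.nonempty_Icc.mpr hab) hcont
  exact ⟨y, hy, fun z hz => hmin hz⟩

lemma argminD_subD {a b : ℝ} {h : ℝ → ℝ} {y : ℝ} (hy : y ∈ argminD a b h) :
    (0 : ℝ) ∈ subD a b h y := by
  intro z hz
  simpa using hy.2 z hz

lemma dD_le {a b : ℝ} (hab : a ≤ b) (f g : ℝ → ℝ) : dD a b f g ≤ b - a := by
  unfold dD
  rcases eq_empty_or_nonempty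
    {r | ∃ x ∈ argminD a b f, ∃ y ∈ argminD a b g, r = |x - y|} with he | ⟨r, hr⟩
  · rw [he, Real.sInf_empty]; linarith
  · obtain ⟨x, hx, y, hy, rfl⟩ := hr
    refine csInf_le_of_le ⟨0, ?_⟩ ⟨x, hx, y, hy, rfl⟩ ?_
    · rintro r ⟨_, _, _, _, rfl⟩; exact abs_nonneg _
    · rw [abs_le]
      constructor
      · linarith [hx.1.1, hx.1.2, hy.1.1, hy.1.2]
      · linarith [hx.1.1, hx.1.2, hy.1.1, hy.1.2]

lemma omegaD_bddAbove {a b : ℝ} (hab : a ≤ b) (f : ℝ → ℝ) (ε : ℝ) :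
    BddAbove {r | ∃ g : ℝ → ℝ, ConvexOn ℝ (Icc a b) g ∧
      (∃ L, LipschitzOnWith L g (Icc a b)) ∧ kappaD a b f g ≤ ε ∧ r = dD a b f g} := by
  refine ⟨b - a, ?_⟩
  rintro r ⟨g, _, _, _, rfl⟩
  exact dD_le hab f g

lemma psi_strictMono {kr : ℝ} (hkr : 1 < kr) :
    StrictMonoOn (fun x : ℝ => x - x ^ kr) (Icc 0 (kr ^ (-(1/(kr-1)) : ℝ))) := by
  have hkr0 : (0:ℝ) < kr := by linarith
  set p := kr ^ (-(1/(kr-1)) : ℝ) with hp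
  have hcont : ContinuousOn (fun x : ℝ => x - x ^ kr) (Icc 0 p) :=
    (continuous_id.sub (Real.continuous_rpow_const (by positivity))).continuousOn
  apply strictMonoOn_of_deriv_pos (convex_Icc 0 p) hcont
  intro x hx
  rw [interior_Icc] at hx
  have hx0 : 0 < x := hx.1
  have hd : HasDerivAt (fun x : ℝ => x - x ^ kr) (1 - kr * x ^ (kr - 1)) x := by
    exact (hasDerivAt_id' x).sub (Real.hasDerivAt_rpow_const (Or.inl hx0.ne'))
  rw [hd.deriv]
  have hlt : x ^ (kr-1) < p ^ (kr-1) := Real.rpow_lt_rpow hx0.le hx.2 (by linarith)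
  have hpk : p ^ (kr - 1) = kr⁻¹ := by
    rw [hp, ← Real.rpow_mul hkr0.le]
    have hne : kr - 1 ≠ 0 := ne_of_gt (by linarith)
    have : (-(1/(kr-1))) * (kr-1) = -1 := by field_simp
    rw [this, Real.rpow_neg_one]
  rw [hpk] at hlt
  have h2 : kr * x ^ (kr-1) < kr * kr⁻¹ := by
    exact mul_lt_mul_of_pos_left hlt hkr0
  rw [mul_inv_cancel₀ hkr0.ne'] at h2
  linarith

theorem modulus_continuity_under_tilting (a b : ℝ) (f : ℝ → ℝ)
    (hconv : ConvexOn ℝ (Icc a b) f) (hlip : ∃ L, LipschitzOnWith L f (Icc a b))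
    (xl xr : ℝ) (hax : a < xl) (hxlr : xl ≤ xr) (hxb : xr < b)
    (hargmin : argminD a b f = Icc xl xr)
    (kl kr laml lamr : ℝ) (hkl : 1 < kl) (hkr : 1 < kr) (hlaml : 0 < laml) (hlamr : 0 < lamr)
    (hgrowthr : Tendsto (fun δ : ℝ => (f (xr + δ) - f xr - lamr * δ ^ kr) / δ ^ kr)
      (nhdsWithin 0 (Ioi 0)) (nhds 0))
    (hgrowthl : Tendsto (fun δ : ℝ => (f (xl - δ) - f xl - laml * δ ^ kl) / δ ^ kl)
      (nhdsWithin 0 (Ioi 0)) (nhds 0))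
    (hkk : kl ≤ kr) (hll : kr = kl → laml ≤ lamr)
    (c C : ℝ) (hc : c < 1) (hC : 1 < C) :
    ∃ ε₀ > 0, ∀ ε ∈ Ioo (0 : ℝ) ε₀,
      omegaD a b (fun x => f x - ε * x) (c * ε) ≤
          (2 * C) ^ (1 / (kr - 1)) * (ε / lamr) ^ (1 / (kr - 1)) ∧
      (2 * C) ^ (1 / (kr - 1)) * (ε / lamr) ^ (1 / (kr - 1)) ≤
          Real.exp 1 * (2 * C ^ 2) ^ (1 / (kr - 1)) * omegaD a b f ε := by
  obtain ⟨L, hL⟩ := hlip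
  have hab : a ≤ b := by linarith
  have hkr0 : (0:ℝ) < kr := by linarith
  have hC0 : (0:ℝ) < C := by linarith
  set k1 := kr - 1 with hk1def
  have hk1 : 0 < k1 := by rw [hk1def]; linarith
  set e1 := 1 / k1 with he1def
  have he1 : 0 < e1 := by rw [he1def]; positivity
  set pstar := kr ^ (-e1) with hpstardef
  have hpstar_pos : 0 < pstar := Real.rpow_pos_of_pos hkr0 _
  have hpstar_le1 : pstar ≤ 1 :=
    Real.rpow_le_one_of_one_le_of_nonpos (by linarith) (by linarith)
  have hexp_le : (Real.exp 1)⁻¹ ≤ pstar := by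
    rw [hpstardef, Real.rpow_def_of_pos hkr0, ← Real.exp_neg]
    apply Real.exp_le_exp.mpr
    have hlog : Real.log kr ≤ k1 := by
      rw [hk1def]; exact Real.log_le_sub_one_of_pos hkr0
    have hlog0 : 0 ≤ Real.log kr := Real.log_nonneg (by linarith)
    rw [he1def, mul_neg, neg_le_neg_iff, mul_one_div, div_le_one hk1]
    exact hlog
  set q := (Real.exp 1)⁻¹ * C ^ (-e1) with hqdef
  have hCe1_lt1 : C ^ (-e1) < 1 := Real.rpow_lt_one_of_one_lt_of_neg hC (by linarith)
  have hq_pos : 0 < q := by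
    rw [hqdef]; positivity
  have hq_lt : q < pstar := by
    calc q < (Real.exp 1)⁻¹ * 1 := by
          rw [hqdef]
          exact mul_lt_mul_of_pos_left hCe1_lt1 (by positivity)
      _ = (Real.exp 1)⁻¹ := mul_one _
      _ ≤ pstar := hexp_le
  set q' := (q + pstar)/2 with hq'def
  have hq'1 : q < q' := by rw [hq'def]; linarith
  have hq'2 : q' < pstar := by rw [hq'def]; linarith
  have hq'0 : 0 < q' := lt_trans hq_pos hq'1
  have hpsi : StrictMonoOn (fun x : ℝ => x - x ^ kr) (Icc 0 pstar) := by
    have := psi_strictMono hkr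
    rw [hpstardef, he1def, hk1def]
    exact this
  have hgap : 0 < (pstar - pstar ^ kr) - (q' - q' ^ kr) := by
    have := hpsi ⟨hq'0.le, hq'2.le⟩ ⟨hpstar_pos.le, le_refl _⟩ hq'2
    simp only at this
    linarith
  set η := min (1 - 1/C) (min (((pstar - pstar ^ kr) - (q' - q' ^ kr))/3) (1/2)) with hηdef
  have hη_pos : 0 < η := by
    rw [hηdef]
    apply lt_min
    · have : 1/C < 1 := by rw [div_lt_one hC0]; exact hC
      linarith
    · exact lt_min (by linarith) (by norm_num)
  have hη_half : η ≤ 1/2 := le_trans (min_le_right _ _) (min_le_right _ _)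
  have hη_C : η ≤ 1 - 1/C := min_le_left _ _
  have hη_gap : 2*η < (pstar - pstar ^ kr) - (q' - q' ^ kr) := by
    have h1 : η ≤ ((pstar - pstar ^ kr) - (q' - q' ^ kr))/3 :=
      le_trans (min_le_right _ _) (min_le_left _ _)
    linarith
  obtain ⟨δ₀, hδ₀pos, hgr⟩ : ∃ δ₀ > 0, ∀ δ, 0 < δ → δ < δ₀ →
      |f (xr + δ) - f xr - lamr * δ ^ kr| ≤ η * lamr * δ ^ kr := by
    obtain ⟨δ₀, hδ₀, hball⟩ :=
      Metric.tendsto_nhdsWithin_nhds.mp hgrowthr (η*lamr) (by positivity)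
    refine ⟨δ₀, hδ₀, fun δ hδ hδ' => ?_⟩
    have hd : dist δ 0 < δ₀ := by
      rw [Real.dist_eq, sub_zero, abs_of_pos hδ]; exact hδ'
    have := hball (mem_Ioi.mpr hδ) hd
    rw [Real.dist_eq, sub_zero] at this
    have hδk : 0 < δ ^ kr := Real.rpow_pos_of_pos hδ _
    rw [abs_div, abs_of_pos hδk, div_lt_iff₀ hδk] at this
    linarith
  set D0 := min δ₀ (b - xr) / 2 with hD0def
  have hD0pos : 0 < D0 := by
    rw [hD0def]
    have : 0 < min δ₀ (b - xr) := lt_min hδ₀pos (by linarith)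
    linarith
  have hD0δ₀ : D0 < δ₀ := by
    rw [hD0def]
    have h1 : min δ₀ (b - xr) ≤ δ₀ := min_le_left _ _
    linarith
  have hD0b : D0 ≤ b - xr := by
    rw [hD0def]
    have h1 : min δ₀ (b - xr) ≤ b - xr := min_le_right _ _
    linarith
  have hD0k1 : 0 < D0 ^ k1 := Real.rpow_pos_of_pos hD0pos _
  set ε₁ := (1-η)*lamr*D0 ^ k1/2 with hε₁def
  set ε₂ := lamr * D0 ^ k1 with hε₂def
  have hε₁pos : 0 < ε₁ := by
    rw [hε₁def]
    have : (0:ℝ) < 1 - η := by linarith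
    positivity
  have hε₂pos : 0 < ε₂ := by rw [hε₂def]; positivity
  refine ⟨min ε₁ ε₂, lt_min hε₁pos hε₂pos, fun ε hε => ?_⟩
  obtain ⟨hε0, hεlt⟩ := hε
  have hεε₁ : ε < ε₁ := lt_of_lt_of_le hεlt (min_le_left _ _)
  have hεε₂ : ε < ε₂ := lt_of_lt_of_le hεlt (min_le_right _ _)
  set B := (ε/lamr) ^ e1 with hBdef
  have hBpos : 0 < B := Real.rpow_pos_of_pos (by positivity) _
  have hBD0 : B < D0 := by
    have h1 : ε/lamr < D0 ^ k1 := by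
      rw [div_lt_iff₀ hlamr]
      rw [hε₂def] at hεε₂
      linarith [hεε₂]
    calc B < (D0 ^ k1) ^ e1 := Real.rpow_lt_rpow (by positivity) h1 he1
      _ = D0 := by
        rw [← Real.rpow_mul hD0pos.le, he1def, mul_one_div_cancel hk1.ne', Real.rpow_one]
  have hxrmem : xr ∈ argminD a b f := by
    rw [hargmin]; exact right_mem_Icc.mpr hxlr
  have hfxr : ∀ z ∈ Icc a b, f xr ≤ f z := hxrmem.2
  have hxrIcc : xr ∈ Icc a b := hxrmem.1
  have hcollapse : ∀ t : ℝ, 0 ≤ t → (t ^ k1) ^ e1 = t := by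
    intro t ht
    rw [← Real.rpow_mul ht, he1def, mul_one_div_cancel hk1.ne', Real.rpow_one]
  have hkrk1 : kr = k1 + 1 := by rw [hk1def]; ring
  have loc : ∀ y ∈ Icc a b, ∀ σ, σ ∈ subD a b f y → 0 < σ → σ ≤ 2*ε →
      xr ≤ y ∧ y - xr ≤ D0 ∧ y - xr ≤ (2*C*(ε/lamr)) ^ e1 := by
    intro y hy σ hσ hσ0 hσ2
    have hsub := hσ xr hxrIcc
    have hfy : f xr ≤ f y := hfxr y hy
    have hprod : σ * (xr - y) ≤ 0 := by linarith only [hsub, hfy]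
    have hxy : xr ≤ y := by
      by_contra hxy'
      push_neg at hxy'
      have := mul_pos hσ0 (by linarith only [hxy'] : 0 < xr - y)
      linarith only [this, hprod]
    have hδ0 : 0 ≤ y - xr := by linarith only [hxy]
    have hfyd : f y - f xr ≤ σ * (y - xr) := by
      have hring : σ * (xr - y) = -(σ * (y - xr)) := by ring
      linarith only [hsub, hring]
    have hδD0 : y - xr ≤ D0 := by
      by_contra hcon
      push_neg at hcon
      have hδpos : 0 < y - xr := lt_trans hD0pos hcon
      set t := D0 / (y - xr) with htdef
      have ht0 : 0 < t := div_pos hD0pos hδpos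
      have ht1 : t < 1 := (div_lt_one hδpos).mpr hcon
      have hpt : (1-t) • xr + t • y = xr + D0 := by
        simp only [smul_eq_mul]
        rw [htdef]
        field_simp
        ring
      have hcvx := hconv.2 hxrIcc hy (by linarith : (0:ℝ) ≤ 1 - t) ht0.le (by ring)
      rw [hpt] at hcvx
      simp only [smul_eq_mul] at hcvx
      have hgl := hgr D0 hD0pos hD0δ₀
      have h1 : (1-η)*lamr*D0 ^ kr ≤ f (xr + D0) - f xr := by
        rcases abs_le.mp hgl with ⟨ha1, _⟩
        linarith only [ha1]
      have h2 : t * (y - xr) = D0 := by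
        rw [htdef]; field_simp
      have h3 : f (xr + D0) - f xr ≤ 2*ε*D0 := by
        have h4 : t * (f y - f xr) ≤ t * (σ * (y - xr)) :=
          mul_le_mul_of_nonneg_left hfyd ht0.le
        have h5 : t * (σ * (y - xr)) = σ * D0 := by rw [← h2]; ring
        have h6 : σ * D0 ≤ 2*ε*D0 := by
          have := mul_le_mul_of_nonneg_right hσ2 hD0pos.le
          linarith only [this]
        linarith only [hcvx, h4, h5, h6]
      have hD0k : D0 ^ kr = D0 ^ k1 * D0 := by
        rw [hkrk1, Real.rpow_add hD0pos, Real.rpow_one]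
      rw [hε₁def] at hεε₁
      have hX : 2*ε < (1-η)*lamr*D0 ^ k1 := by linarith only [hεε₁]
      have hX2 := mul_lt_mul_of_pos_right hX hD0pos
      rw [hD0k] at h1
      linarith only [hX2, h1, h3]
    refine ⟨hxy, hδD0, ?_⟩
    rcases eq_or_lt_of_le hδ0 with heq | hδpos
    · rw [← heq]
      positivity
    · have hδδ₀ : y - xr < δ₀ := lt_of_le_of_lt hδD0 hD0δ₀
      have hgl := hgr (y - xr) hδpos hδδ₀
      have hxrδ : xr + (y - xr) = y := by ring
      rw [hxrδ] at hgl
      have h1 : (1-η)*lamr*(y - xr) ^ kr ≤ f y - f xr := by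
        rcases abs_le.mp hgl with ⟨ha1, _⟩
        linarith only [ha1]
      have hδk : (y - xr) ^ kr = (y - xr) ^ k1 * (y - xr) := by
        rw [hkrk1, Real.rpow_add hδpos, Real.rpow_one]
      have h4 : (1-η)*lamr*(y - xr) ^ k1 ≤ 2*ε := by
        have hσ2' : σ * (y - xr) ≤ 2*ε*(y - xr) := by
          have := mul_le_mul_of_nonneg_right hσ2 hδ0
          linarith only [this]
        have h5 : ((1-η)*lamr*(y - xr) ^ k1) * (y - xr) ≤ (2*ε) * (y - xr) := by
          have h6 : (1-η)*lamr*((y - xr) ^ k1 * (y - xr)) ≤ 2*ε*(y - xr) := by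
            rw [← hδk]; linarith only [h1, hfyd, hσ2']
          linarith only [h6]
        exact le_of_mul_le_mul_right h5 hδpos
      have h5 : (y - xr) ^ k1 ≤ 2*C*(ε/lamr) := by
        have hCη : 1 ≤ C*(1-η) := by
          have h7 := mul_le_mul_of_nonneg_left hη_C hC0.le
          have hCC : C * (1/C) = 1 := by field_simp
          linarith only [h7, hCC]
        have hgoal : (y - xr) ^ k1 * lamr ≤ 2*C*ε := by
          have hY := Real.rpow_pos_of_pos hδpos k1
          have hc1 := mul_le_mul_of_nonneg_left h4 hC0.le
          have hc2 := mul_le_mul_of_nonneg_left hCη (mul_pos hY hlamr).le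
          linarith only [hc1, hc2]
        rw [show 2*C*(ε/lamr) = (2*C*ε)/lamr by ring, le_div_iff₀ hlamr]
        exact hgoal
      calc y - xr = ((y - xr) ^ k1) ^ e1 := (hcollapse _ hδ0).symm
        _ ≤ (2*C*(ε/lamr)) ^ e1 := Real.rpow_le_rpow (by positivity) h5 he1.le
  have hgconv : ConvexOn ℝ (Icc a b) (fun x => f x - ε * x) := tilt_convex hconv
  have hglip : LipschitzOnWith (L + ‖ε‖₊) (fun x => f x - ε * x) (Icc a b) :=
    tilt_lipschitz hL
  have hRR : (2*C) ^ e1 * (ε/lamr) ^ e1 = (2*C*(ε/lamr)) ^ e1 := by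
    rw [Real.mul_rpow (by positivity : (0:ℝ) ≤ 2*C) (by positivity : (0:ℝ) ≤ ε/lamr)]
  constructor
  · -- first inequality
    rw [hRR]
    show omegaD a b (fun x => f x - ε * x) (c * ε) ≤ (2*C*(ε/lamr)) ^ e1
    apply Real.sSup_le _ (by positivity)
    rintro r ⟨h, hhconv, ⟨Lh, hhlip⟩, hκ, rfl⟩
    obtain ⟨xg, hxg⟩ := argminD_nonempty hab hglip.continuousOn
    obtain ⟨y, hy⟩ := argminD_nonempty hab hhlip.continuousOn
    have h0h : (0:ℝ) ∈ subD a b h y := argminD_subD hy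
    have hmh : minSubD a b h y = 0 := by unfold minSubD; rw [if_pos h0h]
    have hbdd : BddAbove {r | ∃ x ∈ Icc a b,
        r = |minSubD a b (fun x => f x - ε * x) x - minSubD a b h x|} := by
      refine ⟨((L + ‖ε‖₊ : NNReal) : ℝ) + (Lh : ℝ), ?_⟩
      rintro r ⟨x, hx, rfl⟩
      have hb1 := minSubD_abs_le hgconv hglip hx
      have hb2 := minSubD_abs_le hhconv hhlip hx
      calc |minSubD a b (fun x => f x - ε * x) x - minSubD a b h x|
          ≤ |minSubD a b (fun x => f x - ε * x) x| + |minSubD a b h x| := abs_sub _ _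
        _ ≤ ((L + ‖ε‖₊ : NNReal) : ℝ) + (Lh : ℝ) := add_le_add hb1 hb2
    have hvle : |minSubD a b (fun x => f x - ε * x) y - minSubD a b h y| ≤ c * ε := by
      refine le_trans (le_csSup hbdd ⟨y, hy.1, rfl⟩) ?_
      exact hκ
    rw [hmh, sub_zero] at hvle
    have hcε : c * ε < ε := by
      have := mul_lt_mul_of_pos_right hc hε0
      linarith only [this]
    have hv := (minSubD_spec hgconv hglip hy.1).1
    have hσy : minSubD a b (fun x => f x - ε * x) y + ε ∈ subD a b f y := subD_tilt.mp hv
    obtain ⟨hv1, hv2⟩ := abs_le.mp hvle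
    have locy := loc y hy.1 _ hσy (by linarith) (by linarith)
    have hσg : (0:ℝ) + ε ∈ subD a b f xg := subD_tilt.mp (argminD_subD hxg)
    rw [zero_add] at hσg
    have locg := loc xg hxg.1 ε hσg hε0 (by linarith)
    have hdd : dD a b (fun x => f x - ε * x) h ≤ |xg - y| := by
      have hbb : BddBelow {r | ∃ x ∈ argminD a b (fun x => f x - ε * x),
          ∃ y ∈ argminD a b h, r = |x - y|} := by
        refine ⟨0, ?_⟩
        rintro r ⟨x₁, hx₁, y₁, hy₁, rfl⟩
        exact abs_nonneg _
      exact csInf_le hbb ⟨xg, hxg, y, hy, rfl⟩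
    refine le_trans hdd (abs_le.mpr ⟨?_, ?_⟩)
    · linarith [locg.1, locg.2.2, locy.1, locy.2.2]
    · linarith [locg.1, locg.2.2, locy.1, locy.2.2]
  · -- second inequality
    have hκfg : kappaD a b f (fun x => f x - ε * x) ≤ ε := kappa_tilt_le hconv hL hε0
    obtain ⟨y0, hy0⟩ := argminD_nonempty hab hglip.continuousOn
    have hlow : ∀ r ∈ {r | ∃ x ∈ argminD a b f,
        ∃ y ∈ argminD a b (fun x => f x - ε * x), r = |x - y|}, q * B ≤ r := by
      rintro r ⟨x, hx, y, hy, rfl⟩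
      have hxmem := hx
      rw [hargmin] at hxmem
      have hσ : (0:ℝ) + ε ∈ subD a b f y := subD_tilt.mp (argminD_subD hy)
      rw [zero_add] at hσ
      have locy := loc y hy.1 ε hσ hε0 (by linarith)
      have hδ0 : 0 ≤ y - xr := by linarith [locy.1]
      have hqB : q' * B ≤ y - xr := by
        rcases le_or_gt (pstar * B) (y - xr) with hcase | hcase
        · have : q' * B ≤ pstar * B := by
            apply mul_le_mul_of_nonneg_right hq'2.le hBpos.le
          linarith only [this, hcase]
        · have hδ'pos : 0 < pstar * B := by positivity
          have hδ'B : pstar * B ≤ B := by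
            have := mul_le_mul_of_nonneg_right hpstar_le1 hBpos.le
            linarith only [this]
          have hδ'δ₀ : pstar * B < δ₀ := by linarith only [hδ'B, hBD0, hD0δ₀]
          have hzIcc : xr + pstar * B ∈ Icc a b :=
            ⟨by linarith only [hδ'pos, hax, hxlr], by linarith only [hδ'B, hBD0, hD0b]⟩
          have hsub := hσ (xr + pstar * B) hzIcc
          have hup := hgr (pstar * B) hδ'pos hδ'δ₀
          have h2 : f (xr + pstar * B) - f xr ≤ (1+η)*lamr*(pstar * B) ^ kr := by
            rcases abs_le.mp hup with ⟨_, ha2⟩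
            linarith only [ha2]
          have h3 : (1-η)*lamr*(y - xr) ^ kr ≤ f y - f xr := by
            rcases eq_or_lt_of_le hδ0 with heq | hpos
            · have hzk : ((0:ℝ)) ^ kr = 0 := Real.zero_rpow (by linarith : kr ≠ 0)
              rw [← heq, hzk]
              have := hfxr y hy.1
              linarith only [this]
            · have hgl2 := hgr (y - xr) hpos (by linarith only [hcase, hδ'δ₀])
              have hxrδ : xr + (y - xr) = y := by ring
              rw [hxrδ] at hgl2
              rcases abs_le.mp hgl2 with ⟨ha1, _⟩
              linarith only [ha1]
          have hkey : ε * (pstar * B - (y - xr)) ≤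
              (1+η)*lamr*(pstar * B) ^ kr - (1-η)*lamr*(y - xr) ^ kr := by
            have hring : ε * (xr + pstar * B - y) = ε * (pstar * B - (y - xr)) := by ring
            linarith only [hsub, h2, h3, hring]
          set p := (y - xr) / B with hpdef
          have hpB : y - xr = p * B := by
            rw [hpdef]; field_simp
          have hp0 : 0 ≤ p := div_nonneg hδ0 hBpos.le
          have hppstar : p < pstar := by
            rw [hpB] at hcase
            exact lt_of_mul_lt_mul_right hcase hBpos.le
          have hBk : lamr * B ^ kr = ε * B := by
            have hb1 : B ^ kr = (ε/lamr) ^ (e1*kr) := by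
              rw [hBdef, ← Real.rpow_mul (by positivity)]
            have hb2 : e1 * kr = 1 + e1 := by
              rw [he1def, hk1def]
              field_simp
              rw [eq_comm, one_add_div (by linarith : (0:ℝ) < kr - 1).ne', sub_add_cancel]
            rw [hb1, hb2, Real.rpow_add (by positivity), Real.rpow_one, hBdef]
            field_simp
          have hδk : (y - xr) ^ kr = p ^ kr * B ^ kr := by
            rw [hpB, Real.mul_rpow hp0 hBpos.le]
          have hδ'k : (pstar * B) ^ kr = pstar ^ kr * B ^ kr := by
            rw [Real.mul_rpow hpstar_pos.le hBpos.le]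
          have hmain : pstar - p ≤ (1+η)*pstar ^ kr - (1-η)*p ^ kr := by
            have hεB : 0 < ε * B := by positivity
            have hkey' : (pstar - p) * (ε*B) ≤
                ((1+η)*pstar ^ kr - (1-η)*p ^ kr) * (ε*B) := by
              have e1' : ε * (pstar * B - (y - xr)) = (pstar - p) * (ε*B) := by
                rw [hpB]; ring
              have e2' : (1+η)*lamr*(pstar * B) ^ kr - (1-η)*lamr*(y - xr) ^ kr =
                  ((1+η)*pstar ^ kr - (1-η)*p ^ kr) * (ε*B) := by
                rw [hδk, hδ'k]
                have : (1+η)*lamr*(pstar ^ kr * B ^ kr) - (1-η)*lamr*(p ^ kr * B ^ kr) =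
                    ((1+η)*pstar ^ kr - (1-η)*p ^ kr) * (lamr * B ^ kr) := by ring
                rw [this, hBk]
              linarith only [hkey, e1', e2']
            exact le_of_mul_le_mul_right hkey' hεB
          have hpk1 : p ^ kr ≤ 1 :=
            Real.rpow_le_one hp0 (by linarith only [hppstar, hpstar_le1]) hkr0.le
          have hpsk1 : pstar ^ kr ≤ 1 := Real.rpow_le_one hpstar_pos.le hpstar_le1 hkr0.le
          have hψ : (pstar - pstar ^ kr) - (p - p ^ kr) ≤ 2*η := by
            have hpkr0 : 0 ≤ p ^ kr := Real.rpow_nonneg hp0 _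
            have hpskr0 : 0 ≤ pstar ^ kr := Real.rpow_nonneg hpstar_pos.le _
            have hm1 := mul_le_mul_of_nonneg_left hpsk1 hη_pos.le
            have hm2 := mul_le_mul_of_nonneg_left hpk1 hη_pos.le
            linarith only [hmain, hm1, hm2]
          have hq'p : q' ≤ p := by
            by_contra hcon2
            push_neg at hcon2
            have h1 := hpsi.monotoneOn ⟨hp0, by linarith only [hcon2, hq'2]⟩
              ⟨hq'0.le, hq'2.le⟩ hcon2.le
            linarith only [hψ, hη_gap, h1]
          rw [hpB]
          exact mul_le_mul_of_nonneg_right hq'p hBpos.le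
      have habs : |x - y| = y - x := by
        rw [abs_of_nonpos (by linarith only [hxmem.2, hδ0, hqB, hq'0, hBpos] : x - y ≤ 0)]
        ring
      rw [habs]
      have hqq' : q * B ≤ q' * B := mul_le_mul_of_nonneg_right hq'1.le hBpos.le
      linarith only [hxmem.2, hqB, hqq']
    have hddlow : q * B ≤ dD a b f (fun x => f x - ε * x) := by
      have hxlmem : xl ∈ argminD a b f := by
        rw [hargmin]; exact left_mem_Icc.mpr hxlr
      have hne : {r | ∃ x ∈ argminD a b f,
          ∃ y ∈ argminD a b (fun x => f x - ε * x), r = |x - y|}.Nonempty :=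
        ⟨|xl - y0|, xl, hxlmem, y0, hy0, rfl⟩
      exact le_csInf hne hlow
    have hω : q * B ≤ omegaD a b f ε := by
      refine le_trans hddlow (le_csSup (omegaD_bddAbove hab f ε) ?_)
      exact ⟨fun x => f x - ε * x, hgconv, ⟨L + ‖ε‖₊, hglip⟩, hκfg, rfl⟩
    have hfact : Real.exp 1 * (2*C^2) ^ e1 * (q*B) = (2*C) ^ e1 * B := by
      have h1 : (2*C^2 : ℝ) ^ e1 = (2*C) ^ e1 * C ^ e1 := by
        rw [← Real.mul_rpow (by positivity : (0:ℝ) ≤ 2*C) (by positivity : (0:ℝ) ≤ C)]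
        ring_nf
      have h2 : C ^ e1 * C ^ (-e1) = 1 := by
        rw [← Real.rpow_add hC0]
        simp
      have h3 : Real.exp 1 * (Real.exp 1)⁻¹ = 1 := mul_inv_cancel₀ (Real.exp_ne_zero 1)
      calc Real.exp 1 * (2*C^2) ^ e1 * (q*B)
          = (Real.exp 1 * (Real.exp 1)⁻¹) * (C ^ e1 * C ^ (-e1)) * ((2*C) ^ e1 * B) := by
            rw [hqdef, h1]; ring
        _ = (2*C) ^ e1 * B := by rw [h2, h3]; ring
    calc (2*C) ^ e1 * B = Real.exp 1 * (2*C^2) ^ e1 * (q*B) := hfact.symm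
      _ ≤ Real.exp 1 * (2*C^2) ^ e1 * omegaD a b f ε := by
          apply mul_le_mul_of_nonneg_left hω (by positivity)
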